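/- Let 0 < h_A < h₅. Then: (1) for every s ∈ [h_A, h₅), √(2 h₅ (s + h₅)) − 2s > 0, so the integrand below is well defined and positive; (2) the integral ∫_{h_A}^{h} 3 / (√(2 h₅ (s + h₅)) − 2s) ds tends to +∞ as h → h₅ from the left (equivalently, s ↦ 3/(√(2h₅(s+h₅)) − 2s) is not integrable on (h_A, h₅)). Consequently, in the relation ln((t − t̂)/(t₄ − t̂)) = ∫_{h_A}^{h} 3/(√(2h₅(s+h₅)) − 2s) ds governing the penetration of the 1-shock through the 1-rarefaction, the time t tends to +∞ as h → h₅, so the shock cannot finish penetrating the rarefaction in finite time when h₅ ≤ h₋. -/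

import Mathlib

open Real Filter MeasureTheory intervalIntegral Set


/-- For `0 < h_A < h₅`: (1) the integrand `3/(√(2h₅(s+h₅)) − 2s)` is well
defined and positive on `[h_A, h₅)`; (2) the integral
`∫_{h_A}^{h} 3/(√(2h₅(s+h₅)) − 2s) ds` tends to `+∞` as `h → h₅⁻`
(equivalently, the integrand is not integrable on `(h_A, h₅)`); consequently,
the penetration time `t = t̂ + (t₄ − t̂)·exp(∫_{h_A}^{h} …)` tends to `+∞` as
`h → h₅⁻`, so the 1-shock cannot finish penetrating the 1-rarefaction in
finite time. -/
theorem stmt_18 (hA h₅ that t₄ : ℝ) (h1 : 0 < hA) (h2 : hA < h₅)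
    (ht : that < t₄) :
    (∀ s ∈ Set.Ico hA h₅, 0 < Real.sqrt (2 * h₅ * (s + h₅)) - 2 * s)
    ∧ Filter.Tendsto
        (fun h : ℝ => ∫ s in hA..h, 3 / (Real.sqrt (2 * h₅ * (s + h₅)) - 2 * s))
        (nhdsWithin h₅ (Set.Iio h₅)) Filter.atTop
    ∧ ¬ MeasureTheory.IntegrableOn
        (fun s : ℝ => 3 / (Real.sqrt (2 * h₅ * (s + h₅)) - 2 * s))
        (Set.Ioo hA h₅)
    ∧ Filter.Tendsto
        (fun h : ℝ => that + (t₄ - that)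
          * Real.exp (∫ s in hA..h, 3 / (Real.sqrt (2 * h₅ * (s + h₅)) - 2 * s)))
        (nhdsWithin h₅ (Set.Iio h₅)) Filter.atTop := by
  have h5pos : 0 < h₅ := h1.trans h2
  set f : ℝ → ℝ := fun s => 3 / (Real.sqrt (2 * h₅ * (s + h₅)) - 2 * s) with hfdef
  -- Part 1: positivity of the denominator
  have key : ∀ s ∈ Set.Ico hA h₅, 0 < Real.sqrt (2 * h₅ * (s + h₅)) - 2 * s := by
    intro s hs
    obtain ⟨hs1, hs2⟩ := hs
    have hs0 : 0 < s := h1.trans_le hs1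
    have hlt : 2 * s < Real.sqrt (2 * h₅ * (s + h₅)) := by
      rw [show (2:ℝ) * s = Real.sqrt ((2*s)^2) from (Real.sqrt_sq (by positivity)).symm]
      apply Real.sqrt_lt_sqrt (by positivity)
      nlinarith
    linarith
  set c : ℝ := hA / h₅ with hcdef
  have hcpos : 0 < c := by positivity
  -- lower bound on f
  have lower : ∀ s ∈ Set.Ico hA h₅, c / (h₅ - s) ≤ f s := by
    intro s hs
    obtain ⟨hs1, hs2⟩ := hs
    have hs0 : 0 < s := h1.trans_le hs1
    have harg : (0:ℝ) ≤ 2 * h₅ * (s + h₅) := by positivity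
    have hsq : (Real.sqrt (2 * h₅ * (s + h₅)))^2 = 2 * h₅ * (s + h₅) := Real.sq_sqrt harg
    have hden := key s ⟨hs1, hs2⟩
    rw [hfdef]
    simp only
    rw [div_le_div_iff₀ (by linarith) hden, hcdef, div_mul_eq_mul_div, div_le_iff₀ h5pos]
    nlinarith [hsq, Real.sqrt_nonneg (2 * h₅ * (s + h₅)),
      mul_nonneg hden.le
        (show (0:ℝ) ≤ Real.sqrt (2 * h₅ * (s + h₅)) + 2 * s - 2 * hA by
          nlinarith [Real.sqrt_nonneg (2 * h₅ * (s + h₅))]),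
      sq_nonneg (h₅ - s)]
  -- continuity of f on Ico hA h₅
  have hcont : ContinuousOn f (Set.Ico hA h₅) := by
    apply ContinuousOn.div continuousOn_const
    · exact ((Real.continuous_sqrt.comp (by continuity)).sub (by continuity)).continuousOn
    · intro s hs; exact ne_of_gt (key s hs)
  -- interval integrability of f on [hA, h] for h ∈ Ioo hA h₅
  have hint : ∀ h ∈ Set.Ioo hA h₅, IntervalIntegrable f MeasureTheory.volume hA h := by
    intro h hh
    apply ContinuousOn.intervalIntegrable
    apply hcont.mono
    rw [Set.uIcc_of_le hh.1.le]
    intro x hx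
    exact ⟨hx.1, lt_of_le_of_lt hx.2 hh.2⟩
  -- lower comparison function and its integral
  have hGint : ∀ h ∈ Set.Ioo hA h₅,
      (∫ s in hA..h, c / (h₅ - s)) = c * Real.log (h₅ - hA) - c * Real.log (h₅ - h) := by
    intro h hh
    have huIcc : Set.uIcc hA h = Set.Icc hA h := Set.uIcc_of_le hh.1.le
    have hderiv : ∀ x ∈ Set.uIcc hA h,
        HasDerivAt (fun s => -(c * Real.log (h₅ - s))) (c / (h₅ - x)) x := by
      intro x hx
      rw [huIcc] at hx
      have hne : h₅ - x ≠ 0 := by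
        have : x < h₅ := lt_of_le_of_lt hx.2 hh.2
        linarith [this]
      have h1' : HasDerivAt (fun s : ℝ => h₅ - s) (-1) x := by
        simpa using (hasDerivAt_id x).const_sub h₅
      have h2' : HasDerivAt (fun s : ℝ => Real.log (h₅ - s)) ((h₅ - x)⁻¹ * (-1)) x :=
        (Real.hasDerivAt_log hne).comp x h1'
      have := ((h2'.const_mul c).neg)
      refine this.congr_deriv ?_
      ring
    rw [intervalIntegral.integral_eq_sub_of_hasDerivAt hderiv]
    · ring
    · apply ContinuousOn.intervalIntegrable
      apply ContinuousOn.div continuousOn_const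
      · fun_prop
      · intro x hx
        rw [huIcc] at hx
        have : x < h₅ := lt_of_le_of_lt hx.2 hh.2
        exact sub_ne_zero.mpr (by linarith)
  have hGintegrable : ∀ h ∈ Set.Ioo hA h₅,
      IntervalIntegrable (fun s => c / (h₅ - s)) MeasureTheory.volume hA h := by
    intro h hh
    apply ContinuousOn.intervalIntegrable
    apply ContinuousOn.div continuousOn_const
    · fun_prop
    · intro x hx
      rw [Set.uIcc_of_le hh.1.le] at hx
      have : x < h₅ := lt_of_le_of_lt hx.2 hh.2
      exact sub_ne_zero.mpr (by linarith)
  -- tendsto of the lower bound integral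
  have hsubtend : Filter.Tendsto (fun h : ℝ => h₅ - h) (nhdsWithin h₅ (Set.Iio h₅))
      (nhdsWithin 0 (Set.Ioi 0)) := by
    apply tendsto_nhdsWithin_of_tendsto_nhds_of_eventually_within
    · have : Filter.Tendsto (fun h : ℝ => h₅ - h) (nhds h₅) (nhds (h₅ - h₅)) :=
        (tendsto_const_nhds.sub tendsto_id)
      simpa using this.mono_left nhdsWithin_le_nhds
    · filter_upwards [self_mem_nhdsWithin] with x hx
      simpa using sub_pos.mpr (Set.mem_Iio.mp hx)
  have hlogtend : Filter.Tendsto (fun h : ℝ => Real.log (h₅ - h))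
      (nhdsWithin h₅ (Set.Iio h₅)) Filter.atBot :=
    Real.tendsto_log_nhdsGT_zero.comp hsubtend
  have hGtend : Filter.Tendsto
      (fun h : ℝ => c * Real.log (h₅ - hA) - c * Real.log (h₅ - h))
      (nhdsWithin h₅ (Set.Iio h₅)) Filter.atTop := by
    have hneg : Filter.Tendsto (fun h : ℝ => -Real.log (h₅ - h))
        (nhdsWithin h₅ (Set.Iio h₅)) Filter.atTop :=
      Filter.tendsto_neg_atBot_atTop.comp hlogtend
    have := Filter.tendsto_atTop_add_const_left _ (c * Real.log (h₅ - hA))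
      (hneg.const_mul_atTop hcpos)
    exact this.congr (fun h => by ring)
  -- Part 2
  have part2 : Filter.Tendsto (fun h : ℝ => ∫ s in hA..h, f s)
      (nhdsWithin h₅ (Set.Iio h₅)) Filter.atTop := by
    apply tendsto_atTop_mono' _ _ hGtend
    filter_upwards [Ioo_mem_nhdsLT h2] with h hh
    rw [← hGint h hh]
    apply intervalIntegral.integral_mono_on hh.1.le (hGintegrable h hh) (hint h hh)
    intro x hx
    exact lower x ⟨hx.1, lt_of_le_of_lt hx.2 hh.2⟩
  refine ⟨key, part2, ?_, ?_⟩
  · -- Part 3: non-integrability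
    intro hInt
    have hfnn : 0 ≤ᵐ[MeasureTheory.volume.restrict (Set.Ioo hA h₅)] f := by
      apply (MeasureTheory.ae_restrict_iff' measurableSet_Ioo).mpr
      apply Filter.Eventually.of_forall
      intro x hx
      exact le_of_lt (div_pos (by norm_num) (key x ⟨hx.1.le, hx.2⟩))
    set B : ℝ := ∫ s in Set.Ioo hA h₅, f s with hB
    have hub : ∀ᶠ h in nhdsWithin h₅ (Set.Iio h₅), (∫ s in hA..h, f s) ≤ B := by
      filter_upwards [Ioo_mem_nhdsLT h2] with h hh
      rw [intervalIntegral.integral_of_le hh.1.le]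
      apply MeasureTheory.setIntegral_mono_set hInt hfnn
      apply Filter.Eventually.of_forall
      intro x hx
      exact ⟨hx.1, lt_of_le_of_lt hx.2 hh.2⟩
    have hgt : ∀ᶠ h in nhdsWithin h₅ (Set.Iio h₅), B < (∫ s in hA..h, f s) :=
      part2.eventually_gt_atTop B
    have : (nhdsWithin h₅ (Set.Iio h₅)).NeBot := nhdsLT_neBot h₅
    obtain ⟨h, hle, hlt⟩ := (hub.and hgt).exists
    linarith
  · -- Part 4
    have hexp : Filter.Tendsto (fun h : ℝ => Real.exp (∫ s in hA..h, f s))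
        (nhdsWithin h₅ (Set.Iio h₅)) Filter.atTop :=
      Real.tendsto_exp_atTop.comp part2
    apply Filter.tendsto_atTop_add_const_left
    exact hexp.const_mul_atTop (by linarith)
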